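/- arXiv:1701.01301 — 3 statements merged into one kernel-verified Lean document; each statement's English description precedes it below -/
import Mathlib

section
/- Let L be a frame (complete Heyting algebra) and γ a cardinal. If L satisfies the transfinite distributivity law at γ, then L satisfies the classical distributivity law at γ: for every family ψ : γ × γ → L one has inf_{i<γ} sup_{j<γ} ψ(i,j) ≤ sup over functions f : γ → γ of inf_{i<γ} ψ(i, f(i)). -/
/-- Restriction of `f : Iio β → Iio o` to `Iio α` for `α ≤ β`. -/
def resFn {o β α : Ordinal} (h : α ≤ β) (f : Set.Iio β → Set.Iio o) :
    Set.Iio α → Set.Iio o :=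
  fun x => f ⟨x.1, lt_of_lt_of_le x.2 h⟩

/-- The unique function `Iio 0 → Iio o`. -/
def emptyFn (o : Ordinal) : Set.Iio (0 : Ordinal) → Set.Iio o :=
  fun t => absurd t.2 (not_lt_of_ge (zero_le (a := t.1)))

lemma resFn_zero {o β : Ordinal} (h : (0 : Ordinal) ≤ β) (f : Set.Iio β → Set.Iio o) :
    resFn h f = emptyFn o :=
  funext fun t => absurd t.2 (not_lt_of_ge (zero_le (a := t.1)))

/-- The transfinite distributivity law at (the initial ordinal of) `o`, for a complete lattice. -/
def TransfiniteDistrib (L : Type*) [CompleteLattice L] (o : Ordinal) : Prop :=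
  ∀ (h0 : (0 : Ordinal) < o)
    (a : (β : Set.Iio o) → (Set.Iio β.1 → Set.Iio o) → L),
    (∀ (β : Ordinal) (hβ : β + 1 < o) (f : Set.Iio β → Set.Iio o),
        a ⟨β, Set.mem_Iio.mpr (lt_of_le_of_lt ((le_self_add : β ≤ β + 1)) hβ)⟩ f ≤
          ⨆ g : {g : Set.Iio (β + 1) → Set.Iio o // resFn ((le_self_add : β ≤ β + 1)) g = f},
            a ⟨β + 1, Set.mem_Iio.mpr hβ⟩ g.1) →
    (∀ (β : Set.Iio o), Order.IsSuccLimit β.1 → ∀ f : Set.Iio β.1 → Set.Iio o,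
        a β f = ⨅ α : Set.Iio β.1,
          a ⟨α.1, Set.mem_Iio.mpr (lt_trans α.2 β.2)⟩ (resFn (le_of_lt α.2) f)) →
    a ⟨0, Set.mem_Iio.mpr h0⟩ (emptyFn o) ≤
      ⨆ f : Set.Iio o → Set.Iio o, ⨅ β : Set.Iio o, a β (resFn (le_of_lt β.2) f)

instance : IsEmpty (Set.Iio (0 : Ordinal)) :=
  ⟨fun t => not_lt_of_ge (zero_le (a := t.1)) t.2⟩

lemma frame_transfiniteDistrib_aux
    (L : Type*) [Order.Frame L] (o : Ordinal) (h0 : (0 : Ordinal) < o)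
    (h : TransfiniteDistrib L o)
    (ψ : ↥(Set.Iio o) × ↥(Set.Iio o) → L) :
    ⨅ i : Set.Iio o, ⨆ j : Set.Iio o, ψ (i, j) ≤
      ⨆ f : (↥(Set.Iio o) → ↥(Set.Iio o)), ⨅ i : Set.Iio o, ψ (i, f i) := by
  set A : L := ⨅ i : Set.Iio o, ⨆ j : Set.Iio o, ψ (i, j) with hA
  set a : (β : Set.Iio o) → (Set.Iio β.1 → Set.Iio o) → L :=
    fun β f => A ⊓ ⨅ i : Set.Iio β.1,
      ψ (⟨i.1, Set.mem_Iio.mpr (lt_trans i.2 β.2)⟩, f i) with ha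
  have key := h h0 a ?_ ?_
  · -- use the conclusion of the transfinite law
    have hA0 : A ≤ a ⟨0, Set.mem_Iio.mpr h0⟩ (emptyFn o) := by
      simp [ha]
    refine le_trans hA0 (le_trans key (iSup_le fun f => ?_))
    -- now bound ⨅ β, a β (f|β) for a fixed f
    have hle : ∀ (i : Set.Iio o), i.1 + 1 < o →
        (⨅ β : Set.Iio o, a β (resFn (le_of_lt β.2) f)) ≤ ψ (i, f i) := by
      intro i hi
      refine le_trans (iInf_le _ ⟨i.1 + 1, Set.mem_Iio.mpr hi⟩) ?_
      refine le_trans inf_le_right ?_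
      have hii : i.1 < i.1 + 1 := by
        rw [Ordinal.add_one_eq_succ]; exact Order.lt_succ i.1
      exact le_trans (iInf_le _ ⟨i.1, hii⟩) (le_of_eq rfl)
    rcases Ordinal.zero_or_succ_or_isSuccLimit o with hz | hsucc | hlim
    · exact absurd h0 (by rw [hz]; exact lt_irrefl 0)
    · -- successor case : o = succ s
      obtain ⟨s, hs⟩ := hsucc
      replace hs := hs.symm
      have hso : s < o := by rw [hs]; exact Order.lt_succ s
      have hXA : (⨅ β : Set.Iio o, a β (resFn (le_of_lt β.2) f)) ≤ A :=
        le_trans (iInf_le _ ⟨0, Set.mem_Iio.mpr h0⟩) inf_le_left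
      set X := ⨅ β : Set.Iio o, a β (resFn (le_of_lt β.2) f) with hX
      have step1 : X ≤ ⨆ j : Set.Iio o, ψ (⟨s, Set.mem_Iio.mpr hso⟩, j) ⊓ X := by
        calc X ≤ (⨆ j : Set.Iio o, ψ (⟨s, Set.mem_Iio.mpr hso⟩, j)) ⊓ X :=
              le_inf (le_trans hXA (iInf_le (fun i : Set.Iio o => ⨆ j : Set.Iio o, ψ (i, j)) ⟨s, Set.mem_Iio.mpr hso⟩)) le_rfl
          _ = ⨆ j : Set.Iio o, ψ (⟨s, Set.mem_Iio.mpr hso⟩, j) ⊓ X := by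
              rw [inf_comm, inf_iSup_eq]; simp [inf_comm]
      refine le_trans step1 (iSup_le fun j => ?_)
      classical
      refine le_iSup_of_le (fun i => if _ : i.1 < s then f i else j) (le_iInf fun i => ?_)
      by_cases hi : i.1 < s
      · have h1 : i.1 + 1 < o := by
          rw [Ordinal.add_one_eq_succ]
          exact lt_of_lt_of_le ((Order.succ_lt_succ_iff).mpr hi) (le_of_eq hs.symm)
        simpa [hi] using le_trans inf_le_right (hle i h1)
      · have heq : i.1 = s := by
          have h2 : i.1 < Order.succ s := by rw [← hs]; exact i.2
          exact le_antisymm (by rwa [Order.lt_succ_iff] at h2) (not_lt.mp hi)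
        have hi' : i = ⟨s, Set.mem_Iio.mpr hso⟩ := Subtype.ext heq
        simp only [hi', dif_neg (lt_irrefl s)]
        exact inf_le_left
    · -- limit case
      refine le_iSup_of_le f (le_iInf fun i => ?_)
      exact hle i (by rw [Ordinal.add_one_eq_succ]; exact hlim.succ_lt i.2)
  · -- successor condition for a
    intro β hβ f
    simp only [ha]
    have hβo : β < o := lt_of_le_of_lt (le_self_add : β ≤ β + 1) hβ
    set Y := A ⊓ ⨅ i : Set.Iio β,
      ψ (⟨i.1, Set.mem_Iio.mpr (lt_trans i.2 hβo)⟩, f i) with hY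
    have step : Y ≤ ⨆ j : Set.Iio o, ψ (⟨β, Set.mem_Iio.mpr hβo⟩, j) ⊓ Y := by
      calc Y ≤ (⨆ j : Set.Iio o, ψ (⟨β, Set.mem_Iio.mpr hβo⟩, j)) ⊓ Y :=
            le_inf (le_trans inf_le_left (iInf_le (fun i : Set.Iio o => ⨆ j : Set.Iio o, ψ (i, j)) ⟨β, Set.mem_Iio.mpr hβo⟩)) le_rfl
        _ = ⨆ j : Set.Iio o, ψ (⟨β, Set.mem_Iio.mpr hβo⟩, j) ⊓ Y := by
            rw [inf_comm, inf_iSup_eq]; simp [inf_comm]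
    refine le_trans (le_of_eq ?_) (le_trans step (iSup_le fun j => ?_))
    · rfl
    classical
    set g : Set.Iio (β + 1) → Set.Iio o :=
      fun x => if hx : x.1 < β then f ⟨x.1, hx⟩ else j with hg
    have hres : resFn (le_self_add : β ≤ β + 1) g = f := by
      funext x
      have hx : x.1 < β := x.2
      simp [hg, resFn, hx]
    refine le_iSup_of_le ⟨g, hres⟩ ?_
    refine le_inf (le_trans inf_le_right inf_le_left) (le_iInf fun i => ?_)
    by_cases hi : i.1 < β
    · refine le_trans inf_le_right (le_trans inf_le_right ?_)
      refine le_trans (iInf_le _ ⟨i.1, hi⟩) (le_of_eq ?_)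
      show ψ (⟨i.1, Set.mem_Iio.mpr (lt_trans hi hβo)⟩, f ⟨i.1, hi⟩) = ψ (_, g i)
      have hgi : g i = f ⟨i.1, hi⟩ := by simp [hg, hi]
      rw [hgi]
    · have heq : i.1 = β := by
        have h1 : i.1 < Order.succ β := by rw [← Ordinal.add_one_eq_succ]; exact i.2
        exact le_antisymm (by rwa [Order.lt_succ_iff] at h1) (not_lt.mp hi)
      have hib : i = ⟨β, by rw [Ordinal.add_one_eq_succ]; exact Order.lt_succ β⟩ :=
        Subtype.ext heq
      refine le_trans inf_le_left (le_of_eq ?_)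
      rw [hib]
      show ψ (⟨β, Set.mem_Iio.mpr hβo⟩, j) =
        ψ (⟨β, Set.mem_Iio.mpr hβo⟩,
          g ⟨β, by rw [Ordinal.add_one_eq_succ]; exact Order.lt_succ β⟩)
      have hgi : g ⟨β, by rw [Ordinal.add_one_eq_succ]; exact Order.lt_succ β⟩ = j := by
        simp [hg]
      rw [hgi]
  · -- limit condition for a
    intro β hβl f
    simp only [ha]
    apply le_antisymm
    · refine le_iInf fun α => ?_
      refine le_inf inf_le_left (le_trans inf_le_right (le_iInf fun i => ?_))
      exact le_trans (iInf_le _ ⟨i.1, Set.mem_Iio.mpr (lt_trans i.2 α.2)⟩) (le_of_eq rfl)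
    · have hne : Nonempty (Set.Iio β.1) := ⟨⟨0, hβl.pos⟩⟩
      refine le_inf (le_trans (iInf_le _ hne.some) inf_le_left) (le_iInf fun i => ?_)
      have hsl : Order.succ i.1 < β.1 := hβl.succ_lt i.2
      refine le_trans (iInf_le _ ⟨Order.succ i.1, hsl⟩) ?_
      refine le_trans inf_le_right ?_
      exact le_trans (iInf_le _ ⟨i.1, Order.lt_succ i.1⟩) (le_of_eq rfl)

/-- If a frame satisfies the transfinite distributivity law at a cardinal `γ`, then it
satisfies the classical distributivity law at `γ`. -/
theorem frame_transfiniteDistrib_implies_classical_distrib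
    (L : Type*) [Order.Frame L] (γ : Cardinal)
    (h : TransfiniteDistrib L γ.ord)
    (ψ : ↥(Set.Iio γ.ord) × ↥(Set.Iio γ.ord) → L) :
    ⨅ i : Set.Iio γ.ord, ⨆ j : Set.Iio γ.ord, ψ (i, j) ≤
      ⨆ f : (↥(Set.Iio γ.ord) → ↥(Set.Iio γ.ord)), ⨅ i : Set.Iio γ.ord, ψ (i, f i) := by
  rcases eq_or_lt_of_le (zero_le (a := γ.ord)) with h0 | h0
  · have he : IsEmpty (Set.Iio γ.ord) := ⟨fun t =>
      not_lt_of_ge (zero_le (a := t.1)) (lt_of_lt_of_eq t.2 h0.symm)⟩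
    refine le_trans le_top (le_iSup_of_le (fun x => x) ?_)
    simp
  · exact frame_transfiniteDistrib_aux L γ.ord h0 h ψ
end

section
/- Let γ be an ordinal and let D be a contravariant functor on the ordinals β ≤ γ: sets D_β with maps p_{β,α} : D_β → D_α for α ≤ β ≤ γ, functorial in α ≤ β. Suppose that p_{β+1,β} : D_{β+1} → D_β is surjective for every β < γ, and that for every limit ordinal β ≤ γ the maps p_{β,α} (α < β) exhibit D_β as the inverse limit of the D_α, i.e., the induced map from D_β to the set of compatible families (x_α)_{α<β} is a bijection. Then the projection p_{γ,0} : D_γ → D_0 is surjective; that is, the transfinite composite of surjections of sets along a continuous ordinal-indexed chain is surjective. -/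
universe u

/-- The transfinite composite of surjections of sets along a continuous ordinal-indexed
inverse chain is surjective: if `D` is a contravariant functor on the ordinals `β ≤ γ` such
that each successor map `D (β+1) → D β` is surjective and at each limit ordinal `β ≤ γ` the
set `D β` is the inverse limit of its predecessors, then the projection `D γ → D 0` is
surjective. -/
theorem transfinite_composite_of_surjections_surjective (γ : Ordinal.{u})
    (D : Set.Iic γ → Type u)
    (p : ∀ (β₁ β₂ : Set.Iic γ), β₁.1 ≤ β₂.1 → D β₂ → D β₁)
    (hid : ∀ (β : Set.Iic γ) (x : D β), p β β le_rfl x = x)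
    (hcomp : ∀ (β₁ β₂ β₃ : Set.Iic γ) (h12 : β₁.1 ≤ β₂.1) (h23 : β₂.1 ≤ β₃.1) (x : D β₃),
      p β₁ β₂ h12 (p β₂ β₃ h23 x) = p β₁ β₃ (h12.trans h23) x)
    (hsucc : ∀ (β : Ordinal) (hβ : β < γ),
      Function.Surjective
        (p ⟨β, Set.mem_Iic.mpr (le_of_lt hβ)⟩
           ⟨β + 1, Set.mem_Iic.mpr (Order.add_one_le_iff.mpr hβ)⟩
           (le_self_add (a := β) (b := 1))))
    (hlim : ∀ (β : Set.Iic γ), Order.IsSuccLimit β.1 →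
      ∀ u : (α : Set.Iio β.1) → D ⟨α.1, Set.mem_Iic.mpr (le_of_lt (lt_of_lt_of_le α.2 β.2))⟩,
        (∀ (α₁ α₂ : Set.Iio β.1) (h12 : α₁.1 ≤ α₂.1),
          p ⟨α₁.1, Set.mem_Iic.mpr (le_of_lt (lt_of_lt_of_le α₁.2 β.2))⟩
            ⟨α₂.1, Set.mem_Iic.mpr (le_of_lt (lt_of_lt_of_le α₂.2 β.2))⟩
            h12 (u α₂) = u α₁) →
        ∃! x : D β, ∀ α : Set.Iio β.1,
          p ⟨α.1, Set.mem_Iic.mpr (le_of_lt (lt_of_lt_of_le α.2 β.2))⟩ β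
            (le_of_lt α.2) x = u α) :
    Function.Surjective
      (p ⟨0, Set.mem_Iic.mpr (zero_le (a := γ))⟩ ⟨γ, Set.mem_Iic.mpr le_rfl⟩
        (zero_le (a := γ))) := by

  classical
  intro x
  let z : Set.Iic γ := ⟨0, Set.mem_Iic.mpr (zero_le (a := γ))⟩
  let E := (α : Set.Iic γ) × D α
  let S : Set (Set E) := { c |
    (⟨z, x⟩ : E) ∈ c ∧
    (∀ (α : Set.Iic γ) (y₁ y₂ : D α), (⟨α, y₁⟩ : E) ∈ c → (⟨α, y₂⟩ : E) ∈ c → y₁ = y₂) ∧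
    (∀ (α₁ α₂ : Set.Iic γ) (h : α₁.1 ≤ α₂.1) (y : D α₂), (⟨α₂, y⟩ : E) ∈ c →
      (⟨α₁, p α₁ α₂ h y⟩ : E) ∈ c) }
  have hc0 : ({⟨z, x⟩} : Set E) ∈ S := by
    refine ⟨rfl, ?_, ?_⟩
    · intro α y₁ y₂ h1 h2
      simp only [Set.mem_singleton_iff] at h1 h2
      obtain ⟨e1, e2⟩ := Sigma.mk.inj_iff.mp h1
      obtain ⟨e3, e4⟩ := Sigma.mk.inj_iff.mp h2
      subst e1
      exact (eq_of_heq e2).trans (eq_of_heq e4).symm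
    · intro α₁ α₂ h y hy
      simp only [Set.mem_singleton_iff] at hy ⊢
      obtain ⟨e1, e2⟩ := Sigma.mk.inj_iff.mp hy
      subst e1
      have hα₁ : α₁ = z := by
        apply Subtype.ext
        exact le_antisymm h (zero_le (a := _))
      subst hα₁
      have : y = x := eq_of_heq e2
      subst this
      exact Sigma.mk.inj_iff.mpr ⟨rfl, heq_of_eq (hid z y)⟩
  have hchain : ∀ c ⊆ S, IsChain (· ⊆ ·) c → c.Nonempty →
      ∃ ub ∈ S, ∀ s ∈ c, s ⊆ ub := by
    intro C hCS hC hne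
    refine ⟨⋃₀ C, ⟨?_, ?_, ?_⟩, fun s hs => Set.subset_sUnion_of_mem hs⟩
    · obtain ⟨c, hc⟩ := hne
      exact Set.mem_sUnion.mpr ⟨c, hc, (hCS hc).1⟩
    · intro α y₁ y₂ h1 h2
      obtain ⟨c₁, hc₁, h1⟩ := Set.mem_sUnion.mp h1
      obtain ⟨c₂, hc₂, h2⟩ := Set.mem_sUnion.mp h2
      rcases hC.total hc₁ hc₂ with hsub | hsub
      · exact (hCS hc₂).2.1 α y₁ y₂ (hsub h1) h2
      · exact (hCS hc₁).2.1 α y₁ y₂ h1 (hsub h2)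
    · intro α₁ α₂ h y hy
      obtain ⟨c, hc, hy⟩ := Set.mem_sUnion.mp hy
      exact Set.mem_sUnion.mpr ⟨c, hc, (hCS hc).2.2 α₁ α₂ h y hy⟩
  obtain ⟨m, -, hmax⟩ := zorn_subset_nonempty S hchain _ hc0
  obtain ⟨hmz, hmfun, hmcl⟩ := hmax.prop
  have main : ∀ β : Ordinal, ∀ hβ : β ≤ γ,
      ∃ y : D ⟨β, hβ⟩, (⟨⟨β, hβ⟩, y⟩ : E) ∈ m := by
    intro β
    induction β using Ordinal.induction with
    | h β IH =>
      intro hβ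
      by_contra hne
      push_neg at hne
      have hexists : ∃ y : D ⟨β, hβ⟩, ∀ (α : Set.Iic γ) (h : α.1 < β) (w : D α),
          (⟨α, w⟩ : E) ∈ m → p α ⟨β, hβ⟩ (le_of_lt h) y = w := by
        rcases Ordinal.zero_or_succ_or_isSuccLimit β with h0 | ⟨ν, hν⟩ | hLim
        · subst h0
          exact ⟨x, fun α h => absurd h (not_lt_zero (a := _))⟩
        · rw [← Ordinal.add_one_eq_succ] at hν
          subst hν
          have hνβ : ν < ν + 1 := by
            rw [Ordinal.add_one_eq_succ]; exact Order.lt_succ ν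
          have hνγ : ν < γ := lt_of_lt_of_le hνβ hβ
          obtain ⟨w, hw⟩ := IH ν hνβ (le_of_lt hνγ)
          obtain ⟨y, hy⟩ := hsucc ν hνγ w
          refine ⟨y, ?_⟩
          intro α h v hv
          have hαν : α.1 ≤ ν := by
            rwa [Ordinal.add_one_eq_succ, Order.lt_succ_iff] at h
          have e1 : p α ⟨ν + 1, hβ⟩ (le_of_lt h) y
              = p α ⟨ν, le_of_lt hνγ⟩ hαν w := by
            rw [← hy]
            exact (hcomp α ⟨ν, le_of_lt hνγ⟩ ⟨ν + 1, hβ⟩ hαν (le_of_lt hνβ) y).symm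
          rw [e1]
          exact hmfun α _ v (hmcl α ⟨ν, le_of_lt hνγ⟩ hαν w hw) hv
        · set u : (α : Set.Iio β) → D ⟨α.1,
              Set.mem_Iic.mpr (le_of_lt (lt_of_lt_of_le α.2 hβ))⟩ :=
            fun α => (IH α.1 α.2 (le_of_lt (lt_of_lt_of_le α.2 hβ))).choose with hu_def
          have hu : ∀ α : Set.Iio β,
              (⟨⟨α.1, Set.mem_Iic.mpr (le_of_lt (lt_of_lt_of_le α.2 hβ))⟩, u α⟩ : E) ∈ m :=
            fun α => (IH α.1 α.2 (le_of_lt (lt_of_lt_of_le α.2 hβ))).choose_spec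
          have hucompat : ∀ (α₁ α₂ : Set.Iio β) (h12 : α₁.1 ≤ α₂.1),
              p ⟨α₁.1, Set.mem_Iic.mpr (le_of_lt (lt_of_lt_of_le α₁.2 hβ))⟩
                ⟨α₂.1, Set.mem_Iic.mpr (le_of_lt (lt_of_lt_of_le α₂.2 hβ))⟩
                h12 (u α₂) = u α₁ := by
            intro α₁ α₂ h12
            exact hmfun _ _ _ (hmcl _ _ h12 _ (hu α₂)) (hu α₁)
          obtain ⟨y, hy, -⟩ := hlim ⟨β, hβ⟩ hLim u hucompat
          refine ⟨y, ?_⟩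
          intro α h v hv
          have e1 := hy ⟨α.1, h⟩
          have e2 : u ⟨α.1, h⟩ = v := hmfun α _ v (hu ⟨α.1, h⟩) hv
          exact e1.trans e2
      obtain ⟨y, hkey⟩ := hexists
      set N : Set E := {e | ∃ h : e.1.1 ≤ β, e.2 = p e.1 ⟨β, hβ⟩ h y} with hN_def
      have hm' : m ∪ N ∈ S := by
        refine ⟨Or.inl hmz, ?_, ?_⟩
        · intro α y₁ y₂ h1 h2
          rcases h1 with h1 | h1 <;> rcases h2 with h2 | h2
          · exact hmfun α y₁ y₂ h1 h2
          · obtain ⟨hb, he⟩ := h2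
            rcases lt_or_eq_of_le hb with hlt | heq
            · exact (he.trans (hkey α hlt y₁ h1)).symm
            · have : α = ⟨β, hβ⟩ := Subtype.ext heq
              subst this
              exact absurd h1 (hne y₁)
          · obtain ⟨hb, he⟩ := h1
            rcases lt_or_eq_of_le hb with hlt | heq
            · exact he.trans (hkey α hlt y₂ h2)
            · have : α = ⟨β, hβ⟩ := Subtype.ext heq
              subst this
              exact absurd h2 (hne y₂)
          · obtain ⟨hb₁, he₁⟩ := h1
            obtain ⟨hb₂, he₂⟩ := h2
            exact he₁.trans he₂.symm
        · intro α₁ α₂ h v hv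
          rcases hv with hv | hv
          · exact Or.inl (hmcl α₁ α₂ h v hv)
          · obtain ⟨hb, he⟩ := hv
            refine Or.inr ⟨h.trans hb, ?_⟩
            show p α₁ α₂ h v = p α₁ ⟨β, hβ⟩ (h.trans hb) y
            rw [show v = p α₂ ⟨β, hβ⟩ hb y from he]
            exact hcomp α₁ α₂ ⟨β, hβ⟩ h hb y
      have hsubm : m ∪ N ⊆ m := hmax.2 hm' Set.subset_union_left
      exact hne (p ⟨β, hβ⟩ ⟨β, hβ⟩ le_rfl y) (hsubm (Or.inr ⟨le_rfl, rfl⟩))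
  obtain ⟨g, hg⟩ := main γ le_rfl
  refine ⟨g, ?_⟩
  exact hmfun z _ x (hmcl z ⟨γ, Set.self_mem_Iic⟩ (zero_le (a := γ)) g hg) hmz
end

section
/- Let P and M be small categories and E : P ⥤ M a functor such that (a) E is surjective on objects, and (b) for every object p of P and every morphism t : E(p) → r in M there exist an object q of P and a morphism l : p → q in P with E(q) = r and E(l) = t. Then the precomposition functor E* : (M ⥤ Type) ⥤ (P ⥤ Type), sending F to F ∘ E, satisfies: (i) E* reflects isomorphisms (it is conservative); and (ii) E* preserves universal quantification of subfunctors: for all functors F, G : M ⥤ Type, every natural transformation f : F ⟶ G, and every subfunctor A of F (a choice of subsets A(m) ⊆ F(m) for each object m, stable under the action of F on morphisms), defining the subfunctor ∀_f A of G by (∀_f A)(m) = { y ∈ G(m) : for every morphism t : m → r of M and every x ∈ F(r), if f_r(x) = G(t)(y) then x ∈ A(r) }, one has, for every object p of P, (∀_{E*f}(E*A))(p) = (∀_f A)(E(p)) as subsets of G(E(p)), where E*A is the subfunctor of F ∘ E given by (E*A)(p) = A(E(p)) and E*f is the whiskered natural transformation F ∘ E ⟶ G ∘ E. -/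
universe u

open CategoryTheory

/-- The universal quantification of a subfunctor `A ⊆ F` along a natural transformation
`f : F ⟶ G` of `Type`-valued functors: `(∀_f A)(c) = { y ∈ G c | ∀ t : c ⟶ r, ∀ x ∈ F r,
f_r x = G t y → x ∈ A r }`. -/
def forallSub {C : Type u} [Category.{u} C] {F G : C ⥤ Type u} (f : F ⟶ G)
    (A : ∀ c : C, Set (F.obj c)) (c : C) : Set (G.obj c) :=
  {y | ∀ (r : C) (t : c ⟶ r) (x : F.obj r), f.app r x = G.map t y → x ∈ A r}

/-- If `E : P ⥤ M` is surjective on objects and every morphism out of an object in the image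
of `E` lifts to `P`, then precomposition with `E` is conservative and preserves universal
quantification of subfunctors. -/
theorem precomposition_conservative_and_preserves_forall
    (P M : Type u) [SmallCategory P] [SmallCategory M] (E : P ⥤ M)
    (hobj : Function.Surjective E.obj)
    (hmor : ∀ (p : P) (r : M) (t : E.obj p ⟶ r),
      ∃ (q : P) (l : p ⟶ q) (hq : E.obj q = r), E.map l ≫ eqToHom hq = t) :
    (∀ {F G : M ⥤ Type u} (f : F ⟶ G), IsIso (Functor.whiskerLeft E f) → IsIso f) ∧
    (∀ (F G : M ⥤ Type u) (f : F ⟶ G) (A : ∀ m : M, Set (F.obj m)),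
      (∀ (m m' : M) (t : m ⟶ m'), ∀ x ∈ A m, F.map t x ∈ A m') →
      ∀ p : P,
        forallSub (Functor.whiskerLeft E f) (fun q => A (E.obj q)) p = forallSub f A (E.obj p)) := by
  constructor
  · intro F G f hiso
    have : ∀ m : M, IsIso (f.app m) := by
      intro m
      obtain ⟨p, rfl⟩ := hobj m
      have := NatIso.isIso_app_of_isIso (Functor.whiskerLeft E f) p
      exact this
    exact NatIso.isIso_of_isIso_app f
  · intro F G f A _ p
    ext y
    constructor
    · intro hy r t x hx
      obtain ⟨q, l, hq, hlt⟩ := hmor p r t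
      subst hq
      simp only [eqToHom_refl, Category.comp_id] at hlt
      subst hlt
      exact hy q l x hx
    · intro hy r t x hx
      exact hy (E.obj r) (E.map t) x hx
end
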